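/- Suppose 1 < s ≤ 2. Let x₀ ∈ ℝⁿ, C₀ > 0, and let u : ℝⁿ → [0,∞] be a Borel measurable function satisfying u(x) ≥ C₀·𝒩u(x) + C₀·|x−x₀|^{(αs−n)/(s−1)} for all x ∈ ℝⁿ. Then there exists a constant C > 0, depending only on n, s, α and C₀, such that for all x ∈ ℝⁿ, u(x) ≥ Σ_{j=1}^∞ C^j · 𝒩^j(f)(x) + C·|x−x₀|^{(αs−n)/(s−1)}, where f(y) = |y−x₀|^{(αs−n)/(s−1)}. -/

import Mathlib

open MeasureTheory Metric Set Filter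
open scoped ENNReal NNReal Topology

noncomputable section

/-- `n`-dimensional Euclidean space. -/
abbrev En (n : ℕ) : Type := EuclideanSpace ℝ (Fin n)

/-- The truncated Wolff potential
`W^ρ_{α,s} μ (x) = ∫_0^ρ (μ(B(x,r))/r^{n-αs})^{1/(s-1)} dr/r`. -/
noncomputable def wolffT (n : ℕ) (α s : ℝ) (μ : Measure (En n)) (ρ : ℝ) (x : En n) : ℝ≥0∞ :=
  ∫⁻ r in Set.Ioo (0:ℝ) ρ,
    (μ (Metric.ball x r) / ENNReal.ofReal (r ^ ((n:ℝ) - α * s))) ^ (1/(s-1))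
      * ENNReal.ofReal r⁻¹

/-- The (full) Wolff potential
`W_{α,s} μ (x) = ∫_0^∞ (μ(B(x,r))/r^{n-αs})^{1/(s-1)} dr/r`. -/
noncomputable def wolff (n : ℕ) (α s : ℝ) (μ : Measure (En n)) (x : En n) : ℝ≥0∞ :=
  ∫⁻ r in Set.Ioi (0:ℝ),
    (μ (Metric.ball x r) / ENNReal.ofReal (r ^ ((n:ℝ) - α * s))) ^ (1/(s-1))
      * ENNReal.ofReal r⁻¹

/-- The truncated Riesz-type potential
`I^ρ μ (x) = ∫_0^ρ (μ(B(x,r))/r^{n-αs}) dr/r`. -/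
noncomputable def rieszT (n : ℕ) (α s : ℝ) (μ : Measure (En n)) (ρ : ℝ) (x : En n) : ℝ≥0∞ :=
  ∫⁻ r in Set.Ioo (0:ℝ) ρ,
    (μ (Metric.ball x r) / ENNReal.ofReal (r ^ ((n:ℝ) - α * s))) * ENNReal.ofReal r⁻¹

/-- The nonlinear operator `𝒩 f (x) = W_{α,s}(f^{s-1} dσ)(x)`. -/
noncomputable def Nop (n : ℕ) (α s : ℝ) (σ : Measure (En n)) (f : En n → ℝ≥0∞) (x : En n) :
    ℝ≥0∞ :=
  ∫⁻ r in Set.Ioi (0:ℝ),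
    (ENNReal.ofReal (r ^ (α * s - (n:ℝ))) * ∫⁻ y in Metric.ball x r, (f y) ^ (s-1) ∂σ)
        ^ (1/(s-1))
      * ENNReal.ofReal r⁻¹

/-- The Riesz potential `I_α f (x) = (n-α)⁻¹ ∫ f(y) |x-y|^{α-n} dy`. -/
noncomputable def rieszPot (n : ℕ) (α : ℝ) (f : En n → ℝ≥0∞) (x : En n) : ℝ≥0∞ :=
  ENNReal.ofReal (((n:ℝ) - α)⁻¹) * ∫⁻ y, f y * ENNReal.ofReal (‖x - y‖ ^ (α - (n:ℝ)))

/-- The Riesz capacity `cap_{α,s}(A) = inf { ∫ f^s : f ≥ 0, I_α f ≥ 1 on A }`. -/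
noncomputable def rieszCap (n : ℕ) (α s : ℝ) (A : Set (En n)) : ℝ≥0∞ :=
  ⨅ (f : En n → ℝ≥0∞) (_ : Measurable f) (_ : ∀ x ∈ A, 1 ≤ rieszPot n α f x),
    ∫⁻ y, (f y) ^ s

/-- Extended exponential: `eexp x = exp x` for finite `x`, with `eexp ∞ = ∞`. -/
noncomputable def eexp (x : ℝ≥0∞) : ℝ≥0∞ :=
  if x = ∞ then ∞ else ENNReal.ofReal (Real.exp x.toReal)

-- pointwise concavity
theorem my_concave {p : ℝ} (hp : 0 < p) (hp1 : p ≤ 1) (w₁ w₂ z₁ z₂ : ℝ≥0∞)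
    (hw : w₁ + w₂ = 1) : w₁ * z₁ ^ p + w₂ * z₂ ^ p ≤ (w₁ * z₁ + w₂ * z₂) ^ p := by
  have hq : 1 ≤ 1 / p := by rw [le_div_iff₀ hp]; linarith
  have h := ENNReal.rpow_arith_mean_le_arith_mean2_rpow w₁ w₂ (z₁ ^ p) (z₂ ^ p) hw hq
  have hz : ∀ z : ℝ≥0∞, (z ^ p) ^ (1 / p) = z := fun z => by
    rw [← ENNReal.rpow_mul, mul_one_div_cancel hp.ne', ENNReal.rpow_one]
  rw [hz z₁, hz z₂] at h
  calc w₁ * z₁ ^ p + w₂ * z₂ ^ p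
      = ((w₁ * z₁ ^ p + w₂ * z₂ ^ p) ^ (1 / p)) ^ p := by
        rw [← ENNReal.rpow_mul, one_div_mul_cancel hp.ne', ENNReal.rpow_one]
    _ ≤ (w₁ * z₁ + w₂ * z₂) ^ p := ENNReal.rpow_le_rpow h hp.le

-- reverse Minkowski
theorem my_rev_mink {X : Type*} [MeasurableSpace X] (μ : Measure X) {p : ℝ}
    (hp : 0 < p) (hp1 : p ≤ 1) (f g : X → ℝ≥0∞) :
    (∫⁻ a, f a ^ p ∂μ) ^ (1/p) + (∫⁻ a, g a ^ p ∂μ) ^ (1/p)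
      ≤ (∫⁻ a, (f a + g a) ^ p ∂μ) ^ (1/p) := by
  have hq : (0:ℝ) < 1/p := by positivity
  set A := ∫⁻ a, f a ^ p ∂μ with hA
  set B := ∫⁻ a, g a ^ p ∂μ with hB
  set R := ∫⁻ a, (f a + g a) ^ p ∂μ with hR
  have hAR : A ≤ R := lintegral_mono fun a => ENNReal.rpow_le_rpow le_self_add hp.le
  have hBR : B ≤ R := lintegral_mono fun a => ENNReal.rpow_le_rpow le_add_self hp.le
  rcases eq_or_ne A 0 with hA0 | hA0
  · rw [hA0, ENNReal.zero_rpow_of_pos hq, zero_add]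
    exact ENNReal.rpow_le_rpow hBR hq.le
  rcases eq_or_ne B 0 with hB0 | hB0
  · rw [hB0, ENNReal.zero_rpow_of_pos hq, add_zero]
    exact ENNReal.rpow_le_rpow hAR hq.le
  rcases eq_or_ne A ⊤ with hAt | hAt
  · have : R = ⊤ := top_le_iff.mp (hAt ▸ hAR)
    rw [this, ENNReal.top_rpow_of_pos hq]; exact le_top
  rcases eq_or_ne B ⊤ with hBt | hBt
  · have : R = ⊤ := top_le_iff.mp (hBt ▸ hBR)
    rw [this, ENNReal.top_rpow_of_pos hq]; exact le_top
  set T := A ^ (1/p) with hT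
  set S := B ^ (1/p) with hS
  have hT0 : T ≠ 0 := by
    simp only [hT, ne_eq, ENNReal.rpow_eq_zero_iff, not_or]
    exact ⟨fun h => hA0 h.1, fun h => hAt h.1⟩
  have hTt : T ≠ ⊤ := by
    simp only [hT, ne_eq, ENNReal.rpow_eq_top_iff, not_or]
    exact ⟨fun h => hA0 h.1, fun h => hAt h.1⟩
  have hS0 : S ≠ 0 := by
    simp only [hS, ne_eq, ENNReal.rpow_eq_zero_iff, not_or]
    exact ⟨fun h => hB0 h.1, fun h => hBt h.1⟩
  have hSt : S ≠ ⊤ := by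
    simp only [hS, ne_eq, ENNReal.rpow_eq_top_iff, not_or]
    exact ⟨fun h => hB0 h.1, fun h => hBt h.1⟩
  set D := T + S with hD
  have hD0 : D ≠ 0 := by simp [hD, hT0]
  have hDt : D ≠ ⊤ := by simp [hD, hTt, hSt]
  set w₁ := T * D⁻¹ with hw₁
  set w₂ := S * D⁻¹ with hw₂
  have hw : w₁ + w₂ = 1 := by
    rw [hw₁, hw₂, ← add_mul, ← hD, ENNReal.mul_inv_cancel hD0 hDt]
  have hw₁0 : w₁ ≠ 0 := mul_ne_zero hT0 (ENNReal.inv_ne_zero.2 hDt)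
  have hw₁t : w₁ ≠ ⊤ := ENNReal.mul_ne_top hTt (ENNReal.inv_ne_top.2 hD0)
  have hw₂0 : w₂ ≠ 0 := mul_ne_zero hS0 (ENNReal.inv_ne_zero.2 hDt)
  have hw₂t : w₂ ≠ ⊤ := ENNReal.mul_ne_top hSt (ENNReal.inv_ne_top.2 hD0)
  have hw₁p0 : w₁ ^ p ≠ 0 := (ENNReal.rpow_pos (pos_iff_ne_zero.mpr hw₁0) hw₁t).ne'
  have hw₁pt : w₁ ^ p ≠ ⊤ := ENNReal.rpow_ne_top_of_nonneg hp.le hw₁t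
  have hw₂p0 : w₂ ^ p ≠ 0 := (ENNReal.rpow_pos (pos_iff_ne_zero.mpr hw₂0) hw₂t).ne'
  have hw₂pt : w₂ ^ p ≠ ⊤ := ENNReal.rpow_ne_top_of_nonneg hp.le hw₂t
  set k₁ := w₁ * (w₁ ^ p)⁻¹ with hk₁
  set k₂ := w₂ * (w₂ ^ p)⁻¹ with hk₂
  have hk₁t : k₁ ≠ ⊤ := ENNReal.mul_ne_top hw₁t (ENNReal.inv_ne_top.2 hw₁p0)
  have hk₂t : k₂ ≠ ⊤ := ENNReal.mul_ne_top hw₂t (ENNReal.inv_ne_top.2 hw₂p0)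
  -- pointwise inequality
  have ptwise : ∀ a, k₁ * f a ^ p + k₂ * g a ^ p ≤ (f a + g a) ^ p := by
    intro a
    have h := my_concave hp hp1 w₁ w₂ (f a * w₁⁻¹) (g a * w₂⁻¹) hw
    have e1 : w₁ * (f a * w₁⁻¹) = f a := by
      rw [mul_comm (f a), ← mul_assoc, ENNReal.mul_inv_cancel hw₁0 hw₁t, one_mul]
    have e1' : w₂ * (g a * w₂⁻¹) = g a := by
      rw [mul_comm (g a), ← mul_assoc, ENNReal.mul_inv_cancel hw₂0 hw₂t, one_mul]
    have e2 : w₁ * (f a * w₁⁻¹) ^ p = k₁ * f a ^ p := by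
      rw [ENNReal.mul_rpow_of_nonneg _ _ hp.le, ENNReal.inv_rpow, hk₁]; ring
    have e2' : w₂ * (g a * w₂⁻¹) ^ p = k₂ * g a ^ p := by
      rw [ENNReal.mul_rpow_of_nonneg _ _ hp.le, ENNReal.inv_rpow, hk₂]; ring
    rwa [e1, e1', e2, e2'] at h
  have key : k₁ * A + k₂ * B ≤ R := by
    rw [hA, hB, ← lintegral_const_mul' _ _ hk₁t, ← lintegral_const_mul' _ _ hk₂t]
    exact le_trans (le_lintegral_add _ _) (lintegral_mono ptwise)
  -- compute the LHS
  have hApow : A = T ^ p := by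
    rw [hT, ← ENNReal.rpow_mul, one_div_mul_cancel hp.ne', ENNReal.rpow_one]
  have hBpow : B = S ^ p := by
    rw [hS, ← ENNReal.rpow_mul, one_div_mul_cancel hp.ne', ENNReal.rpow_one]
  have hw₁D : w₁ * D = T := by
    rw [hw₁, mul_assoc, ENNReal.inv_mul_cancel hD0 hDt, mul_one]
  have hw₂D : w₂ * D = S := by
    rw [hw₂, mul_assoc, ENNReal.inv_mul_cancel hD0 hDt, mul_one]
  have hT_eq : T ^ p = w₁ ^ p * D ^ p := by
    rw [← ENNReal.mul_rpow_of_nonneg _ _ hp.le, hw₁D]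
  have hS_eq : S ^ p = w₂ ^ p * D ^ p := by
    rw [← ENNReal.mul_rpow_of_nonneg _ _ hp.le, hw₂D]
  have hk₁A : k₁ * A = w₁ * D ^ p := by
    rw [hApow, hT_eq, hk₁, mul_assoc, ← mul_assoc (w₁ ^ p)⁻¹,
      ENNReal.inv_mul_cancel hw₁p0 hw₁pt, one_mul]
  have hk₂B : k₂ * B = w₂ * D ^ p := by
    rw [hBpow, hS_eq, hk₂, mul_assoc, ← mul_assoc (w₂ ^ p)⁻¹,
      ENNReal.inv_mul_cancel hw₂p0 hw₂pt, one_mul]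
  have hfinal : D ^ p ≤ R := by
    rw [← one_mul (D ^ p), ← hw, add_mul, ← hk₁A, ← hk₂B]; exact key
  calc T + S = D := rfl
    _ = (D ^ p) ^ (1/p) := by
        rw [← ENNReal.rpow_mul, mul_one_div_cancel hp.ne', ENNReal.rpow_one]
    _ ≤ R ^ (1/p) := ENNReal.rpow_le_rpow hfinal hq.le

theorem Nop_mono {n : ℕ} {α s : ℝ} (hs : 1 < s) (σ : Measure (En n))
    {f g : En n → ℝ≥0∞} (h : ∀ y, f y ≤ g y) (x : En n) :
    Nop n α s σ f x ≤ Nop n α s σ g x := by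
  refine lintegral_mono fun r => mul_le_mul_left (ENNReal.rpow_le_rpow ?_ (one_div_nonneg.mpr (by linarith))) _
  exact mul_le_mul_right (lintegral_mono fun y => ENNReal.rpow_le_rpow (h y) (by linarith)) _

theorem Nop_add {n : ℕ} {α s : ℝ} (hs : 1 < s) (hs2 : s ≤ 2) (σ : Measure (En n))
    (f g : En n → ℝ≥0∞) (x : En n) :
    Nop n α s σ f x + Nop n α s σ g x ≤ Nop n α s σ (fun y => f y + g y) x := by
  have hp : (0:ℝ) < s - 1 := by linarith
  have hp1 : s - 1 ≤ 1 := by linarith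
  unfold Nop
  refine le_trans (le_lintegral_add _ _) (lintegral_mono fun r => ?_)
  rw [← add_mul]
  refine mul_le_mul_left ?_ _
  set c := ENNReal.ofReal (r ^ (α * s - (n:ℝ))) with hc
  have hrw : ∀ h : En n → ℝ≥0∞,
      (c * ∫⁻ y in Metric.ball x r, h y ^ (s-1) ∂σ) ^ (1/(s-1))
        = c ^ (1/(s-1)) * (∫⁻ y in Metric.ball x r, h y ^ (s-1) ∂σ) ^ (1/(s-1)) := fun h => by
    rw [ENNReal.mul_rpow_of_nonneg _ _ (one_div_nonneg.mpr (by linarith))]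
  rw [hrw f, hrw g, hrw (fun y => f y + g y), ← mul_add]
  exact mul_le_mul_right (my_rev_mink (σ.restrict (Metric.ball x r)) hp hp1 f g) _

theorem Nop_smul {n : ℕ} {α s : ℝ} (hs : 1 < s) (σ : Measure (En n))
    (c : ℝ≥0∞) (hc : c ≠ ⊤) (f : En n → ℝ≥0∞) (x : En n) :
    Nop n α s σ (fun y => c * f y) x = c * Nop n α s σ f x := by
  have hp : (0:ℝ) < s - 1 := by linarith
  unfold Nop
  rw [← lintegral_const_mul' c _ hc]
  refine lintegral_congr fun r => ?_
  have h1 : (∫⁻ y in Metric.ball x r, (c * f y) ^ (s-1) ∂σ)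
      = c ^ (s-1) * ∫⁻ y in Metric.ball x r, f y ^ (s-1) ∂σ := by
    rw [← lintegral_const_mul' _ _ (ENNReal.rpow_ne_top_of_nonneg hp.le hc)]
    exact lintegral_congr fun y => ENNReal.mul_rpow_of_nonneg _ _ hp.le
  rw [h1, mul_left_comm, ENNReal.mul_rpow_of_nonneg _ _ (one_div_nonneg.mpr (by linarith : (0:ℝ) ≤ s-1)),
    ← ENNReal.rpow_mul, mul_one_div_cancel hp.ne', ENNReal.rpow_one, mul_assoc]

theorem Nop_sum {n : ℕ} {α s : ℝ} (hs : 1 < s) (hs2 : s ≤ 2) (σ : Measure (En n))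
    (h : ℕ → En n → ℝ≥0∞) (k : ℕ) (x : En n) :
    ∑ j ∈ Finset.range k, Nop n α s σ (h j) x
      ≤ Nop n α s σ (fun y => ∑ j ∈ Finset.range k, h j y) x := by
  induction k with
  | zero => simp
  | succ k ih =>
    simp only [Finset.sum_range_succ]
    calc (∑ j ∈ Finset.range k, Nop n α s σ (h j) x) + Nop n α s σ (h k) x
        ≤ Nop n α s σ (fun y => ∑ j ∈ Finset.range k, h j y) x + Nop n α s σ (h k) x :=
          add_le_add_left ih _
      _ ≤ Nop n α s σ (fun y => (∑ j ∈ Finset.range k, h j y) + h k y) x :=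
          Nop_add hs hs2 σ _ _ x

/-- Lemma `lowbdsum`, case `1 < s ≤ 2`: if
`u ≥ C₀ 𝒩 u + C₀ |x-x₀|^{(αs-n)/(s-1)}` pointwise, then there is `C = C(n,s,α,C₀) > 0` with
`u ≥ Σ_{j=1}^∞ C^j 𝒩^j(f) + C |x-x₀|^{(αs-n)/(s-1)}`, where `f(y) = |y-x₀|^{(αs-n)/(s-1)}`. -/
theorem statement6 (n : ℕ) (hn : 2 ≤ n) (α s C₀ : ℝ) (hs : 1 < s) (hs2 : s ≤ 2) (hα : 0 < α)
    (hαs : α * s < n) (hC₀ : 0 < C₀) :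
    ∃ C : ℝ, 0 < C ∧
      ∀ σ : Measure (En n), IsLocallyFiniteMeasure σ →
        ∀ (x₀ : En n) (u : En n → ℝ≥0∞), Measurable u →
          (∀ x : En n,
            ENNReal.ofReal C₀ * Nop n α s σ u x
              + ENNReal.ofReal C₀ * (ENNReal.ofReal ‖x - x₀‖) ^ ((α*s-(n:ℝ))/(s-1)) ≤ u x) →
          ∀ x : En n,
            (∑' j : ℕ, ENNReal.ofReal C ^ (j+1)
                * ((Nop n α s σ)^[j+1]
                    (fun y => (ENNReal.ofReal ‖y - x₀‖) ^ ((α*s-(n:ℝ))/(s-1))) x))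
              + ENNReal.ofReal C * (ENNReal.ofReal ‖x - x₀‖) ^ ((α*s-(n:ℝ))/(s-1))
              ≤ u x := by
  refine ⟨min C₀ (C₀ * C₀), lt_min hC₀ (by positivity), ?_⟩
  intro σ _ x₀ u _ hyp x
  set f₀ : En n → ℝ≥0∞ := fun y => (ENNReal.ofReal ‖y - x₀‖) ^ ((α*s-(n:ℝ))/(s-1)) with hf₀
  set c : ℝ≥0∞ := ENNReal.ofReal (min C₀ (C₀ * C₀)) with hc
  set c₀ : ℝ≥0∞ := ENNReal.ofReal C₀ with hc₀
  have hct : c ≠ ⊤ := ENNReal.ofReal_ne_top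
  have hcc₀ : c ≤ c₀ := ENNReal.ofReal_le_ofReal (min_le_left _ _)
  have hcc₀2 : c ≤ c₀ * c₀ := by
    rw [hc₀, ← ENNReal.ofReal_mul hC₀.le]
    exact ENNReal.ofReal_le_ofReal (min_le_right _ _)
  set N : (En n → ℝ≥0∞) → En n → ℝ≥0∞ := Nop n α s σ with hN
  have key : ∀ m : ℕ, ∀ z : En n,
      (∑ j ∈ Finset.range m, c ^ (j+1) * N^[j+1] f₀ z) + c₀ * f₀ z ≤ u z := by
    intro m
    induction m with
    | zero => intro z; simpa [hf₀] using le_trans le_add_self (hyp z)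
    | succ m ih =>
      intro z
      -- Nop of the previous bound
      have h2 : (∑ j ∈ Finset.range m, c ^ (j+1) * N^[j+1+1] f₀ z) + c₀ * N f₀ z
          ≤ N (fun y => (∑ j ∈ Finset.range m, c ^ (j+1) * N^[j+1] f₀ y) + c₀ * f₀ y) z := by
        refine le_trans (add_le_add ?_ ?_) (Nop_add hs hs2 σ _ _ z)
        · refine le_trans ?_ (Nop_sum hs hs2 σ (fun j y => c ^ (j+1) * N^[j+1] f₀ y) m z)
          refine Finset.sum_le_sum fun j _ => ?_
          rw [Nop_smul hs σ _ (ENNReal.pow_ne_top hct) (N^[j+1] f₀) z, ← hN,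
            ← Function.iterate_succ_apply' N (j+1) f₀]
        · rw [Nop_smul hs σ c₀ ENNReal.ofReal_ne_top f₀ z]
      have h3 : N (fun y => (∑ j ∈ Finset.range m, c ^ (j+1) * N^[j+1] f₀ y) + c₀ * f₀ y) z
          ≤ N u z := Nop_mono hs σ (fun y => ih y) z
      calc (∑ j ∈ Finset.range (m+1), c ^ (j+1) * N^[j+1] f₀ z) + c₀ * f₀ z
          = ((∑ j ∈ Finset.range m, c ^ (j+1+1) * N^[j+1+1] f₀ z) + c ^ (0+1) * N^[0+1] f₀ z)
              + c₀ * f₀ z := by rw [Finset.sum_range_succ']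
        _ ≤ ((∑ j ∈ Finset.range m, c₀ * (c ^ (j+1) * N^[j+1+1] f₀ z)) + c₀ * (c₀ * N f₀ z))
              + c₀ * f₀ z := by
            refine add_le_add_left (add_le_add ?_ ?_) _
            · refine Finset.sum_le_sum fun j _ => ?_
              rw [← mul_assoc]
              refine mul_le_mul_left ?_ _
              calc c ^ (j+1+1) = c * c ^ (j+1) := by ring
                _ ≤ c₀ * c ^ (j+1) := mul_le_mul_left hcc₀ _
            · calc c ^ (0+1) * N^[0+1] f₀ z = c * N f₀ z := by simp
                _ ≤ (c₀ * c₀) * N f₀ z := mul_le_mul_left hcc₀2 _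
                _ = c₀ * (c₀ * N f₀ z) := by rw [mul_assoc]
        _ = c₀ * ((∑ j ∈ Finset.range m, c ^ (j+1) * N^[j+1+1] f₀ z) + c₀ * N f₀ z)
              + c₀ * f₀ z := by rw [← Finset.mul_sum, ← mul_add]
        _ ≤ c₀ * N u z + c₀ * f₀ z := by
            exact add_le_add_left (mul_le_mul_right (le_trans h2 h3) _) _
        _ ≤ u z := hyp z
  have hm : ∀ m : ℕ, (∑ j ∈ Finset.range m, c ^ (j+1) * N^[j+1] f₀ x) + c * f₀ x ≤ u x :=
    fun m => le_trans (add_le_add_right (mul_le_mul_left hcc₀ _) _) (key m x)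
  rw [ENNReal.tsum_eq_iSup_nat, ENNReal.iSup_add]
  exact iSup_le hm
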